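/- Assume in addition that every element of T is the square of an element of T. Then the Cartan map η(u) = u·σ(u)⁻¹ maps the normalizer N_G(K) into F = T ∩ Z(G), is constant on left cosets of K, and the induced map N_G(K)/K → F, uK ↦ u·σ(u)⁻¹, is a group isomorphism. -/

import Mathlib

/-- The subgroup of fixed points of an automorphism `σ` of a group `G`. -/
def fixSubgroup {G : Type*} [Group G] (σ : G ≃* G) : Subgroup G where
  carrier := {g : G | σ g = g}
  one_mem' := map_one σ
  mul_mem' := by
    intro a b ha hb
    simp only [Set.mem_setOf_eq] at *
    rw [map_mul, ha, hb]
  inv_mem' := by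
    intro a ha
    simp only [Set.mem_setOf_eq] at *
    rw [map_inv, ha]

/-- Under the polar decomposition `G = KTK` and assuming every element of `T`
is a square in `T`, the Cartan map `η(u) = u·σ(u)⁻¹` maps `N_G(K)` into
`F = T ∩ Z(G)`, is constant on left cosets of `K`, and the induced map
`N_G(K)/K → F` is a group isomorphism (it is multiplicative, has fibers the
left cosets of `K`, and is surjective onto `F`). -/
theorem cartan_map_induces_isomorphism {G : Type*} [Group G]
    (σ : G ≃* G) (hσ : ∀ g, σ (σ g) = g)
    (T : Subgroup G) (hTcomm : ∀ a ∈ T, ∀ b ∈ T, a * b = b * a)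
    (hσT : ∀ t ∈ T, σ t = t⁻¹)
    (polar : ∀ g : G, ∃ k ∈ fixSubgroup σ, ∃ t ∈ T, ∃ l ∈ fixSubgroup σ,
      g = k * t * l)
    (hsq : ∀ t ∈ T, ∃ s ∈ T, s * s = t) :
    (∀ n ∈ Subgroup.normalizer (fixSubgroup σ : Set G),
        n * (σ n)⁻¹ ∈ T ⊓ Subgroup.center G) ∧
    (∀ n ∈ Subgroup.normalizer (fixSubgroup σ : Set G), ∀ k ∈ fixSubgroup σ,
        (n * k) * (σ (n * k))⁻¹ = n * (σ n)⁻¹) ∧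
    (∀ n ∈ Subgroup.normalizer (fixSubgroup σ : Set G), ∀ m ∈ Subgroup.normalizer (fixSubgroup σ : Set G),
        (n * m) * (σ (n * m))⁻¹ = (n * (σ n)⁻¹) * (m * (σ m)⁻¹)) ∧
    (∀ n ∈ Subgroup.normalizer (fixSubgroup σ : Set G), ∀ m ∈ Subgroup.normalizer (fixSubgroup σ : Set G),
        (n * (σ n)⁻¹ = m * (σ m)⁻¹ ↔ n⁻¹ * m ∈ fixSubgroup σ)) ∧
    (∀ f ∈ T ⊓ Subgroup.center G,
        ∃ n ∈ Subgroup.normalizer (fixSubgroup σ : Set G), n * (σ n)⁻¹ = f) := by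
  -- Part 1: η maps the normalizer into T ⊓ Z(G)
  have key : ∀ n ∈ Subgroup.normalizer (fixSubgroup σ : Set G),
      n * (σ n)⁻¹ ∈ T ⊓ Subgroup.center G := by
    intro n hn
    obtain ⟨k, hk, t, ht, l, hl, rfl⟩ := polar n
    have hσk : σ k = k := hk
    have hσl : σ l = l := hl
    have hσt : σ t = t⁻¹ := hσT t ht
    have hη : (k * t * l) * (σ (k * t * l))⁻¹ = k * (t * t) * k⁻¹ := by
      rw [map_mul, map_mul, hσk, hσl, hσt]; group
    -- t normalizes K
    have htN : t ∈ Subgroup.normalizer (fixSubgroup σ : Set G) := by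
      have hkN : k ∈ Subgroup.normalizer (fixSubgroup σ : Set G) := Subgroup.le_normalizer hk
      have hlN : l ∈ Subgroup.normalizer (fixSubgroup σ : Set G) := Subgroup.le_normalizer hl
      have h := mul_mem (mul_mem (inv_mem hkN) hn) (inv_mem hlN)
      have e : k⁻¹ * (k * t * l) * l⁻¹ = t := by group
      rwa [e] at h
    -- t² centralizes K
    have commK : ∀ x ∈ fixSubgroup σ, Commute (t * t) x := by
      intro x hx
      have h1 : t * x * t⁻¹ ∈ fixSubgroup σ :=
        (Subgroup.mem_normalizer_iff.mp htN x).mp hx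
      have h2 : σ (t * x * t⁻¹) = t * x * t⁻¹ := h1
      have hσx : σ x = x := hx
      rw [map_mul, map_mul, map_inv, hσt, hσx, inv_inv] at h2
      -- h2 : t⁻¹ * x * t = t * x * t⁻¹
      have h3 : x * (t * t) = (t * t) * x := by
        calc x * (t * t) = t * (t⁻¹ * x * t) * t := by group
          _ = t * (t * x * t⁻¹) * t := by rw [h2]
          _ = (t * t) * x := by group
      exact h3.symm
    -- k * t² * k⁻¹ = t²
    have hconj : k * (t * t) * k⁻¹ = t * t := by
      rw [(commK k hk).symm.eq, mul_inv_cancel_right]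
    -- t² is central in G
    have hcent : t * t ∈ Subgroup.center G := by
      rw [Subgroup.mem_center_iff]
      intro g
      obtain ⟨k', hk', s, hs, l', hl', rfl⟩ := polar g
      have c1 : Commute (t * t) k' := commK k' hk'
      have c2 : Commute (t * t) s := hTcomm (t * t) (mul_mem ht ht) s hs
      have c3 : Commute (t * t) l' := commK l' hl'
      exact ((c1.mul_right c2).mul_right c3).symm.eq
    rw [hη, hconj]
    exact ⟨mul_mem ht ht, hcent⟩
  -- Part 2: constancy on left cosets of K
  have coset : ∀ n ∈ Subgroup.normalizer (fixSubgroup σ : Set G), ∀ k ∈ fixSubgroup σ,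
      (n * k) * (σ (n * k))⁻¹ = n * (σ n)⁻¹ := by
    intro n _ k hk
    have hσk : σ k = k := hk
    rw [map_mul, hσk]; group
  refine ⟨key, coset, ?_, ?_, ?_⟩
  · -- multiplicativity
    intro n hn m hm
    have hc := Subgroup.mem_center_iff.mp (key m hm).2
    calc (n * m) * (σ (n * m))⁻¹
        = n * (m * (σ m)⁻¹) * (σ n)⁻¹ := by rw [map_mul]; group
      _ = (m * (σ m)⁻¹) * n * (σ n)⁻¹ := by rw [hc n]
      _ = (n * (σ n)⁻¹) * (m * (σ m)⁻¹) := by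
          rw [mul_assoc, ← hc (n * (σ n)⁻¹)]
  · -- fibers are left cosets
    intro n hn m hm
    constructor
    · intro h
      show σ (n⁻¹ * m) = n⁻¹ * m
      have h2 : σ n * n⁻¹ = σ m * m⁻¹ := by
        have := congrArg (·⁻¹) h
        simpa [mul_inv_rev] using this
      have h3 : σ m = σ n * n⁻¹ * m := by rw [h2]; group
      rw [map_mul, map_inv, h3]; group
    · intro h
      have e := coset n hn (n⁻¹ * m) h
      rw [mul_inv_cancel_left] at e
      exact e.symm
  · -- surjectivity onto F
    rintro f ⟨hfT, hfZ⟩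
    obtain ⟨s, hs, hss⟩ := hsq f hfT
    have hσs : σ s = s⁻¹ := hσT s hs
    have hc : ∀ g : G, g * (s * s) = (s * s) * g := by
      intro g; rw [hss]; exact Subgroup.mem_center_iff.mp hfZ g
    have hsN : s ∈ Subgroup.normalizer (fixSubgroup σ : Set G) := by
      rw [Subgroup.mem_normalizer_iff]
      intro x
      constructor
      · intro hx
        have hσx : σ x = x := hx
        show σ (s * x * s⁻¹) = s * x * s⁻¹
        rw [map_mul, map_mul, map_inv, hσs, hσx, inv_inv]
        calc s⁻¹ * x * s = s⁻¹ * (x * (s * s)) * s⁻¹ := by group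
          _ = s⁻¹ * ((s * s) * x) * s⁻¹ := by rw [hc x]
          _ = s * x * s⁻¹ := by group
      · intro hx
        have h2 : σ (s * x * s⁻¹) = s * x * s⁻¹ := hx
        rw [map_mul, map_mul, map_inv, hσs, inv_inv] at h2
        -- h2 : s⁻¹ * σ x * s = s * x * s⁻¹
        show σ x = x
        calc σ x = s * (s⁻¹ * σ x * s) * s⁻¹ := by group
          _ = s * (s * x * s⁻¹) * s⁻¹ := by rw [h2]
          _ = (s * s) * x * ((s * s))⁻¹ := by group
          _ = x * (s * s) * ((s * s))⁻¹ := by rw [← hc x]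
          _ = x := by group
    exact ⟨s, hsN, by rw [hσs, inv_inv, hss]⟩
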